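/- arXiv:2409.03505 — 3 statements merged into one kernel-verified Lean document; each statement's English description precedes it below -/
import Mathlib

section
/- Fix q ∈ (0,1), β ∈ [0,∞), γ ∈ (0,∞), and ζ ∈ (0, (min{q,1−q})^{1/(β+1)}/γ]. For every (possibly randomized) data-driven algorithm that maps n IID demand samples to a decision A ≥ 0, there exists a (β,γ,ζ)-clustered probability distribution taking values in [0,1], with CDF F, optimal decision a*, and expected loss L, such that with probability at least 1/3, the additive regret satisfies L(A) − L(a*) ≥ (1/(8·max{γ,1}))·(q(1−q)/(3√n))^{(β+2)/(β+1)}. -/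
open MeasureTheory Set
open scoped Classical

noncomputable section

/-- The Newsvendor loss `ℓ(a,Z) = q·max{Z−a,0} + (1−q)·max{a−Z,0}` with critical quantile `q`. -/
def nvLoss (q a z : ℝ) : ℝ := q * max (z - a) 0 + (1 - q) * max (a - z) 0

/-- The expected Newsvendor loss `L(a)` under the demand distribution `μ`. -/
def expLoss (q : ℝ) (μ : Measure ℝ) (a : ℝ) : ℝ := ∫ z, nvLoss q a z ∂μ

/-- The CDF of the demand distribution `μ`. -/
def cdf' (μ : Measure ℝ) (z : ℝ) : ℝ := (μ (Iic z)).toReal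

/-- The optimal decision `a* = inf {a ≥ 0 : F(a) ≥ q}`. -/
def optDec (q : ℝ) (μ : Measure ℝ) : ℝ := sInf {a : ℝ | 0 ≤ a ∧ q ≤ cdf' μ a}

/-- The empirical CDF of the samples `ω : Fin n → ℝ`. -/
def empCdf (n : ℕ) (ω : Fin n → ℝ) (z : ℝ) : ℝ :=
  (∑ i : Fin n, if ω i ≤ z then (1 : ℝ) else 0) / n

/-- The SAA (sample average approximation) decision `â = inf {a ≥ 0 : F̂(a) ≥ q}`. -/
def saa (q : ℝ) (n : ℕ) (ω : Fin n → ℝ) : ℝ := sInf {a : ℝ | 0 ≤ a ∧ q ≤ empCdf n ω a}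

/-- The joint law of `n` iid samples from `μ`. -/
def iid (μ : Measure ℝ) (n : ℕ) : Measure (Fin n → ℝ) := Measure.pi fun _ => μ

/-- A distribution `μ` is `(β,γ,ζ)`-clustered if
`|a − a*| ≤ (1/γ)·|F(a) − q|^{1/(β+1)}` for all `a ∈ [a*−ζ, a*+ζ]`. -/
def Clustered (q β γ ζ : ℝ) (μ : Measure ℝ) : Prop :=
  ∀ a ∈ Icc (optDec q μ - ζ) (optDec q μ + ζ),
    |a - optDec q μ| ≤ (1 / γ) * |cdf' μ a - q| ^ ((1 : ℝ) / (β + 1))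

-- === core real inequality ===

/-- sum over boolean tuples of a product = power of the sum. -/
lemma sum_prod_bool (n : ℕ) (g : Bool → ℝ) :
    ∑ f : Fin n → Bool, ∏ i, g (f i) = (g true + g false) ^ n := by
  classical
  have h := Finset.prod_univ_sum (fun _ : Fin n => (Finset.univ : Finset Bool)) (fun _ b => g b)
  rw [Fintype.piFinset_univ] at h
  rw [← h]
  simp [Fintype.sum_bool]

lemma min_eq_half (x y : ℝ) : min x y = (x + y - |x - y|) / 2 := by
  rcases le_total x y with h | h
  · rw [min_eq_left h, abs_of_nonpos (by linarith)]; ring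
  · rw [min_eq_right h, abs_of_nonneg (by linarith)]; ring


lemma sqrt_lower (q δ : ℝ) (hq0 : 0 < q) (hδ0 : 0 < δ) (hδq : δ ≤ q) :
    q - δ ^ 2 / q ≤ Real.sqrt ((q + δ) * (q - δ)) := by
  set A : ℝ := δ ^ 2 / q with hA
  have hA0 : 0 ≤ A := by positivity
  have hAq : A * q = δ ^ 2 := div_mul_cancel₀ _ hq0.ne'
  have hAδ : A ≤ δ := by rw [hA, div_le_iff₀ hq0]; nlinarith
  have hpos1 : (0:ℝ) ≤ (q + δ) * (q - δ) := by nlinarith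
  rw [Real.le_sqrt (by linarith) hpos1]
  nlinarith [mul_self_le_mul_self hA0 hAδ]

lemma r_lower (q δ x : ℝ) (hq0 : 0 < q) (hq1 : q < 1) (hδ0 : 0 < δ)
    (hδq : δ ≤ q) (hδq' : δ ≤ 1 - q) (h2 : δ ^ 2 ≤ x * (q * (1 - q))) :
    1 - x ≤ Real.sqrt ((q + δ) * (q - δ)) + Real.sqrt ((1 - q - δ) * (1 - q + δ)) := by
  have hq1' : (0:ℝ) < 1 - q := by linarith
  have b1 := sqrt_lower q δ hq0 hδ0 hδq
  have b2 := sqrt_lower (1 - q) δ hq1' hδ0 hδq'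
  rw [show (1 - q + δ) * (1 - q - δ) = (1 - q - δ) * (1 - q + δ) by ring] at b2
  have hAB : δ ^ 2 / q + δ ^ 2 / (1 - q) ≤ x := by
    have h1 : (δ ^ 2 / q + δ ^ 2 / (1 - q)) * (q * (1 - q)) = δ ^ 2 := by
      field_simp
      ring
    nlinarith [mul_pos hq0 hq1']
  linarith

lemma core_min_sum (n : ℕ) (hn : 1 ≤ n) (q δ : ℝ) (hq0 : 0 < q) (hq1 : q < 1)
    (hδ0 : 0 < δ) (hδq : δ ≤ q) (hδq' : δ ≤ 1 - q)
    (hδn : δ ^ 2 * (36 * n) ≤ q * (1 - q)) :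
    (2:ℝ)/3 ≤ ∑ f : Fin n → Bool,
      min (∏ i, (if f i then q + δ else 1 - q - δ)) (∏ i, (if f i then q - δ else 1 - q + δ)) := by
  classical
  set cp : Bool → ℝ := fun b => if b then q + δ else 1 - q - δ with hcp
  set cm : Bool → ℝ := fun b => if b then q - δ else 1 - q + δ with hcm
  have hcp0 : ∀ b, 0 ≤ cp b := by intro b; cases b <;> simp [hcp] <;> linarith
  have hcm0 : ∀ b, 0 ≤ cm b := by intro b; cases b <;> simp [hcm] <;> linarith
  set a : (Fin n → Bool) → ℝ := fun f => ∏ i, cp (f i) with ha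
  set b : (Fin n → Bool) → ℝ := fun f => ∏ i, cm (f i) with hb
  have ha0 : ∀ f, 0 ≤ a f := fun f => Finset.prod_nonneg (fun i _ => hcp0 _)
  have hb0 : ∀ f, 0 ≤ b f := fun f => Finset.prod_nonneg (fun i _ => hcm0 _)
  have suma : ∑ f, a f = 1 := by
    rw [ha]; rw [sum_prod_bool n cp]
    simp [hcp]
  have sumb : ∑ f, b f = 1 := by
    rw [hb]; rw [sum_prod_bool n cm]
    simp [hcm]
  -- the affinity
  set r : ℝ := Real.sqrt ((q + δ) * (q - δ)) + Real.sqrt ((1 - q - δ) * (1 - q + δ)) with hr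
  have hrsum : ∑ f, Real.sqrt (a f * b f) = r ^ n := by
    have h1 : ∀ f : Fin n → Bool, Real.sqrt (a f * b f) = ∏ i, Real.sqrt (cp (f i) * cm (f i)) := by
      intro f
      have h2 : (∏ i, Real.sqrt (cp (f i) * cm (f i))) ^ 2 = a f * b f := by
        rw [← Finset.prod_pow]
        have : ∀ i : Fin n, Real.sqrt (cp (f i) * cm (f i)) ^ 2 = cp (f i) * cm (f i) :=
          fun i => Real.sq_sqrt (mul_nonneg (hcp0 _) (hcm0 _))
        rw [Finset.prod_congr rfl (fun i _ => this i), ha, hb, ← Finset.prod_mul_distrib]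
      rw [← h2, Real.sqrt_sq (Finset.prod_nonneg (fun i _ => Real.sqrt_nonneg _))]
    rw [Finset.sum_congr rfl (fun f _ => h1 f), sum_prod_bool n (fun b => Real.sqrt (cp b * cm b))]
    simp [hcp, hcm, hr]
  -- bounds on r
  have hq1' : 0 < 1 - q := by linarith
  have hr1 : r ≤ 1 := by
    have e1 : (q + δ) * (q - δ) = q ^ 2 - δ ^ 2 := by ring
    have e2 : (1 - q - δ) * (1 - q + δ) = (1 - q) ^ 2 - δ ^ 2 := by ring
    have b1 : Real.sqrt ((q + δ) * (q - δ)) ≤ q := by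
      rw [e1]
      calc Real.sqrt (q ^ 2 - δ ^ 2) ≤ Real.sqrt (q ^ 2) :=
            Real.sqrt_le_sqrt (by nlinarith)
        _ = q := Real.sqrt_sq hq0.le
    have b2 : Real.sqrt ((1 - q - δ) * (1 - q + δ)) ≤ 1 - q := by
      rw [e2]
      calc Real.sqrt ((1 - q) ^ 2 - δ ^ 2) ≤ Real.sqrt ((1 - q) ^ 2) :=
            Real.sqrt_le_sqrt (by nlinarith)
        _ = 1 - q := Real.sqrt_sq hq1'.le
    rw [hr]; linarith
  have hn0 : (0:ℝ) < n := by exact_mod_cast Nat.pos_of_ne_zero (by omega)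
  set x : ℝ := 1 / (36 * n) with hx
  have hx0 : 0 < x := by positivity
  have hxsmall : x ≤ 1 / 36 := by
    rw [hx]
    apply div_le_div_of_nonneg_left (by norm_num) (by norm_num)
    have : (1:ℝ) ≤ n := by exact_mod_cast hn
    linarith
  have hrlow : 1 - x ≤ r := by
    have h2 : δ ^ 2 ≤ x * (q * (1 - q)) := by
      rw [hx, div_mul_eq_mul_div, one_mul, le_div_iff₀ (by positivity)]
      linarith [hδn]
    rw [hr]
    exact r_lower q δ x hq0 hq1 hδ0 hδq hδq' h2
  -- now Cauchy-Schwarz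
  set u : (Fin n → Bool) → ℝ := fun f => Real.sqrt (a f) with hu
  set v : (Fin n → Bool) → ℝ := fun f => Real.sqrt (b f) with hv
  have hu0 : ∀ f, 0 ≤ u f := fun f => Real.sqrt_nonneg _
  have hv0 : ∀ f, 0 ≤ v f := fun f => Real.sqrt_nonneg _
  have hu2 : ∀ f, u f ^ 2 = a f := fun f => Real.sq_sqrt (ha0 f)
  have hv2 : ∀ f, v f ^ 2 = b f := fun f => Real.sq_sqrt (hb0 f)
  have huv : ∀ f, u f * v f = Real.sqrt (a f * b f) :=
    fun f => (Real.sqrt_mul (ha0 f) _).symm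
  set ρ : ℝ := r ^ n with hρ
  have hρsum : ∑ f, u f * v f = ρ := by
    rw [Finset.sum_congr rfl (fun f _ => huv f)]; exact hrsum
  have habs : ∀ f, |a f - b f| = |u f - v f| * (u f + v f) := by
    intro f
    rw [← abs_of_nonneg (by positivity : (0:ℝ) ≤ u f + v f), ← abs_mul]
    congr 1
    rw [← hu2 f, ← hv2 f]; ring
  have hCS : (∑ f, |a f - b f|) ^ 2 ≤ (2 - 2 * ρ) * (2 + 2 * ρ) := by
    have h1 : (∑ f, |u f - v f| * (u f + v f)) ^ 2 ≤
        (∑ f, |u f - v f| ^ 2) * (∑ f, (u f + v f) ^ 2) :=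
      Finset.sum_mul_sq_le_sq_mul_sq _ _ _
    have h2 : ∑ f, |u f - v f| ^ 2 = 2 - 2 * ρ := by
      have : ∀ f : Fin n → Bool, |u f - v f| ^ 2 = a f + b f - 2 * (u f * v f) := by
        intro f; rw [sq_abs, ← hu2 f, ← hv2 f]; ring
      rw [Finset.sum_congr rfl (fun f _ => this f)]
      rw [Finset.sum_sub_distrib, Finset.sum_add_distrib, suma, sumb, ← Finset.mul_sum, hρsum]
      ring
    have h3 : ∑ f, (u f + v f) ^ 2 = 2 + 2 * ρ := by
      have : ∀ f : Fin n → Bool, (u f + v f) ^ 2 = a f + b f + 2 * (u f * v f) := by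
        intro f; rw [← hu2 f, ← hv2 f]; ring
      rw [Finset.sum_congr rfl (fun f _ => this f)]
      rw [Finset.sum_add_distrib, Finset.sum_add_distrib, suma, sumb, ← Finset.mul_sum, hρsum]
      ring
    calc (∑ f, |a f - b f|) ^ 2 = (∑ f, |u f - v f| * (u f + v f)) ^ 2 := by
          rw [Finset.sum_congr rfl (fun f _ => habs f)]
      _ ≤ _ := h1
      _ = (2 - 2 * ρ) * (2 + 2 * ρ) := by rw [h2, h3]
  have hρ2 : 17/18 ≤ ρ ^ 2 := by
    have e1 : ρ ^ 2 = r ^ (2 * n) := by rw [hρ, ← pow_mul, mul_comm]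
    have hxlow : (0:ℝ) ≤ 1 - x := by linarith
    have h4 : (1 - x) ^ (2 * n) ≤ r ^ (2 * n) := pow_le_pow_left₀ hxlow hrlow _
    have h5 : 1 + (2 * n : ℕ) * (-x) ≤ (1 + (-x)) ^ (2 * n) := one_add_mul_le_pow (by linarith) _
    have h6 : 1 + (2 * n : ℕ) * (-x) = 1 - (2 * n) * x := by push_cast; ring
    have h7 : (2 * (n:ℝ)) * x = 1 / 18 := by
      rw [hx]; field_simp; ring
    rw [e1]
    calc (17:ℝ)/18 = 1 - 1/18 := by norm_num
      _ = 1 + (2 * n : ℕ) * (-x) := by rw [h6]; push_cast; rw [h7]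
      _ ≤ (1 + (-x)) ^ (2 * n) := h5
      _ = (1 - x) ^ (2 * n) := by ring_nf
      _ ≤ r ^ (2 * n) := h4
  have habssum0 : 0 ≤ ∑ f, |a f - b f| := Finset.sum_nonneg (fun f _ => abs_nonneg _)
  have habssum : ∑ f, |a f - b f| ≤ 2/3 := by
    nlinarith [hCS, hρ2, habssum0]
  have hminsum : ∑ f : Fin n → Bool, min (a f) (b f)
      = (∑ f, a f + ∑ f, b f - ∑ f, |a f - b f|) / 2 := by
    rw [Finset.sum_congr rfl (fun f _ => min_eq_half (a f) (b f)), ← Finset.sum_div,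
      Finset.sum_sub_distrib, Finset.sum_add_distrib]
  show (2:ℝ)/3 ≤ ∑ f : Fin n → Bool, min (a f) (b f)
  rw [hminsum, suma, sumb]
  linarith

/-- two point distribution: mass `p` at `0`, mass `1-p` at `t`. -/
def twoPt (p t : ℝ) : Measure ℝ :=
  ENNReal.ofReal p • Measure.dirac 0 + ENNReal.ofReal (1 - p) • Measure.dirac t

lemma twoPt_apply (p t : ℝ) (hp0 : 0 ≤ p) (hp1 : p ≤ 1) {s : Set ℝ} (hs : MeasurableSet s) :
    twoPt p t s = ENNReal.ofReal p * (if (0:ℝ) ∈ s then 1 else 0)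
      + ENNReal.ofReal (1 - p) * (if t ∈ s then 1 else 0) := by
  rw [twoPt, Measure.add_apply, Measure.smul_apply, Measure.smul_apply,
    Measure.dirac_apply' _ hs, Measure.dirac_apply' _ hs]
  simp [Set.indicator_apply]

lemma twoPt_prob (p t : ℝ) (hp0 : 0 ≤ p) (hp1 : p ≤ 1) : IsProbabilityMeasure (twoPt p t) := by
  constructor
  rw [twoPt_apply p t hp0 hp1 MeasurableSet.univ]
  simp [← ENNReal.ofReal_add hp0 (by linarith : (0:ℝ) ≤ 1 - p)]

lemma twoPt_support (p t : ℝ) (hp0 : 0 ≤ p) (hp1 : p ≤ 1) (ht0 : 0 ≤ t) (ht1 : t ≤ 1) :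
    twoPt p t (Icc (0:ℝ) 1)ᶜ = 0 := by
  rw [twoPt_apply p t hp0 hp1 measurableSet_Icc.compl]
  have h0 : (0:ℝ) ∈ Icc (0:ℝ) 1 := by constructor <;> norm_num
  have h1 : t ∈ Icc (0:ℝ) 1 := ⟨ht0, ht1⟩
  simp [h0, h1]

lemma twoPt_cdf (p t : ℝ) (hp0 : 0 ≤ p) (hp1 : p ≤ 1) (a : ℝ) :
    cdf' (twoPt p t) a = (if (0:ℝ) ≤ a then p else 0) + (if t ≤ a then 1 - p else 0) := by
  rw [cdf', twoPt_apply p t hp0 hp1 measurableSet_Iic]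
  simp only [mem_Iic]
  rcases le_or_gt 0 a with h0 | h0 <;> rcases le_or_gt t a with h1 | h1 <;>
    simp [h0, h1, not_le.mpr, ENNReal.toReal_add, ENNReal.toReal_ofReal, hp0,
      (by linarith : (0:ℝ) ≤ 1 - p)]

lemma optDec_hi (q p t : ℝ) (hp0 : 0 ≤ p) (hp1 : p ≤ 1) (hq : q ≤ p) :
    optDec q (twoPt p t) = 0 := by
  have hset : {a : ℝ | 0 ≤ a ∧ q ≤ cdf' (twoPt p t) a} = Ici 0 := by
    ext a
    simp only [mem_setOf_eq, mem_Ici]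
    constructor
    · exact fun h => h.1
    · intro h
      refine ⟨h, ?_⟩
      rw [twoPt_cdf p t hp0 hp1, if_pos h]
      have : (0:ℝ) ≤ if t ≤ a then 1 - p else 0 := by
        split <;> linarith
      linarith
  rw [optDec, hset, csInf_Ici]

lemma optDec_lo (q p t : ℝ) (hp0 : 0 ≤ p) (hp1 : p ≤ 1) (hq : p < q) (hq1 : q ≤ 1)
    (ht0 : 0 ≤ t) : optDec q (twoPt p t) = t := by
  have hset : {a : ℝ | 0 ≤ a ∧ q ≤ cdf' (twoPt p t) a} = Ici t := by
    ext a
    simp only [mem_setOf_eq, mem_Ici]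
    constructor
    · rintro ⟨h0, hq'⟩
      by_contra h
      rw [twoPt_cdf p t hp0 hp1, if_pos h0, if_neg h] at hq'
      simp at hq'
      linarith
    · intro h
      refine ⟨le_trans ht0 h, ?_⟩
      rw [twoPt_cdf p t hp0 hp1, if_pos (le_trans ht0 h), if_pos h]
      linarith
  rw [optDec, hset, csInf_Ici]

lemma integrable_nvLoss_dirac (q a x : ℝ) : Integrable (nvLoss q a) (Measure.dirac x) := by
  have hm : Measurable (nvLoss q a) := by unfold nvLoss; fun_prop
  refine ⟨hm.aestronglyMeasurable, ?_⟩
  unfold HasFiniteIntegral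
  rw [lintegral_dirac]
  exact enorm_lt_top

lemma twoPt_expLoss (q p t : ℝ) (hp0 : 0 ≤ p) (hp1 : p ≤ 1) (a : ℝ) :
    expLoss q (twoPt p t) a = p * nvLoss q a 0 + (1 - p) * nvLoss q a t := by
  have h1 : Integrable (nvLoss q a) (ENNReal.ofReal p • Measure.dirac (0:ℝ)) :=
    (integrable_nvLoss_dirac q a 0).smul_measure ENNReal.ofReal_ne_top
  have h2 : Integrable (nvLoss q a) (ENNReal.ofReal (1 - p) • Measure.dirac t) :=
    (integrable_nvLoss_dirac q a t).smul_measure ENNReal.ofReal_ne_top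
  rw [expLoss, twoPt, integral_add_measure h1 h2, integral_smul_measure, integral_smul_measure,
    integral_dirac, integral_dirac, ENNReal.toReal_ofReal hp0,
    ENNReal.toReal_ofReal (by linarith : (0:ℝ) ≤ 1 - p)]
  simp [smul_eq_mul]

lemma regret_hi (q δ t a : ℝ) (hq0 : 0 < q) (hq1 : q < 1) (hδ0 : 0 < δ) (hδ1 : q + δ ≤ 1)
    (ht : 0 < t) (ha : 0 ≤ a) :
    δ * min a t ≤ expLoss q (twoPt (q + δ) t) a - expLoss q (twoPt (q + δ) t) 0 := by
  have hp0 : (0:ℝ) ≤ q + δ := by linarith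
  rw [twoPt_expLoss q _ t hp0 hδ1, twoPt_expLoss q _ t hp0 hδ1]
  unfold nvLoss
  simp only [sub_zero, sub_self]
  have e1 : max ((0:ℝ) - a) 0 = 0 := max_eq_right (by linarith)
  have e2 : max a 0 = a := max_eq_left ha
  have e3 : max (0:ℝ) 0 = 0 := by norm_num
  have e4 : max t 0 = t := max_eq_left ht.le
  have e5 : max ((0:ℝ) - t) 0 = 0 := max_eq_right (by linarith)
  rcases le_total a t with h | h
  · rw [min_eq_left h]
    have e6 : max (t - a) 0 = t - a := max_eq_left (by linarith)
    have e7 : max (a - t) 0 = 0 := max_eq_right (by linarith)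
    rw [e1, e2, e3, e4, e5, e6, e7]; ring_nf; nlinarith
  · rw [min_eq_right h]
    have e6 : max (t - a) 0 = 0 := max_eq_right (by linarith)
    have e7 : max (a - t) 0 = a - t := max_eq_left (by linarith)
    rw [e1, e2, e3, e4, e5, e6, e7]; ring_nf; nlinarith

lemma regret_lo (q δ t a : ℝ) (hq0 : 0 < q) (hq1 : q < 1) (hδ0 : 0 < δ) (hδq : δ ≤ q)
    (ht : 0 < t) (ha : 0 ≤ a) (hat : a ≤ t) :
    δ * (t - a) ≤ expLoss q (twoPt (q - δ) t) a - expLoss q (twoPt (q - δ) t) t := by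
  have hp0 : (0:ℝ) ≤ q - δ := by linarith
  have hp1 : q - δ ≤ 1 := by linarith
  rw [twoPt_expLoss q _ t hp0 hp1, twoPt_expLoss q _ t hp0 hp1]
  unfold nvLoss
  simp only [sub_zero, sub_self]
  have e1 : max ((0:ℝ) - a) 0 = 0 := max_eq_right (by linarith)
  have e2 : max a 0 = a := max_eq_left ha
  have e3 : max ((0:ℝ) - t) 0 = 0 := max_eq_right (by linarith)
  have e4 : max (t:ℝ) 0 = t := max_eq_left ht.le
  have e5 : max (t - a) 0 = t - a := max_eq_left (by linarith)
  have e6 : max (a - t) 0 = 0 := max_eq_right (by linarith)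
  have e7 : max (0:ℝ) 0 = 0 := by norm_num
  rw [e1, e2, e3, e4, e5, e6, e7]; ring_nf; nlinarith

lemma rpow_chain (β γ x y d : ℝ) (hβ : 0 ≤ β) (hγ : 0 < γ) (hd0 : 0 ≤ d)
    (hy0 : 0 ≤ y) (hyx : y ≤ x) (hchain : γ * d ≤ y ^ ((1:ℝ)/(β+1))) :
    d ≤ (1 / γ) * x ^ ((1:ℝ)/(β+1)) := by
  have he : (0:ℝ) ≤ 1/(β+1) := by positivity
  have h1 : y ^ ((1:ℝ)/(β+1)) ≤ x ^ ((1:ℝ)/(β+1)) := Real.rpow_le_rpow hy0 hyx he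
  rw [one_div γ, ← div_eq_inv_mul, le_div_iff₀ hγ]
  calc d * γ = γ * d := mul_comm _ _
    _ ≤ y ^ ((1:ℝ)/(β+1)) := hchain
    _ ≤ _ := h1

/-- Clusteredness of the two-point measures. `c` is the optimal decision (0 or t),
`dd = |F - q|` in the middle region. -/
lemma twoPt_clustered (q β γ ζ δ t : ℝ) (hq0 : 0 < q) (hq1 : q < 1) (hβ : 0 ≤ β) (hγ : 0 < γ)
    (hζ0 : 0 < ζ) (hζγ : γ * ζ ≤ (min q (1 - q)) ^ ((1:ℝ)/(β+1)))
    (hδ0 : 0 < δ) (hδq : δ ≤ q) (hδq' : δ ≤ 1 - q)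
    (ht0 : 0 < t) (htγ : γ * t ≤ δ ^ ((1:ℝ)/(β+1)))
    (p : ℝ) (hp : p = q + δ ∨ p = q - δ) :
    Clustered q β γ ζ (twoPt p t) := by
  have hp0 : 0 ≤ p := by rcases hp with h | h <;> rw [h] <;> linarith
  have hp1 : p ≤ 1 := by rcases hp with h | h <;> rw [h] <;> linarith
  have hmin0 : 0 ≤ min q (1 - q) := le_min (by linarith) (by linarith)
  have hminq : min q (1 - q) ≤ q := min_le_left _ _
  have hminq' : min q (1 - q) ≤ 1 - q := min_le_right _ _
  intro a ha
  -- the optimal decision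
  have hopt : optDec q (twoPt p t) = if p < q then t else 0 := by
    rcases lt_or_ge p q with h | h
    · rw [if_pos h]; exact optDec_lo q p t hp0 hp1 h hq1.le ht0.le
    · rw [if_neg (not_lt.mpr h)]; exact optDec_hi q p t hp0 hp1 h
  set c : ℝ := if p < q then t else 0 with hc
  rw [hopt] at ha ⊢
  have hcmem : c = 0 ∨ c = t := by rw [hc]; split <;> simp
  have hdist : |a - c| ≤ ζ := by
    rw [abs_le]; constructor <;> [linarith [ha.1]; linarith [ha.2]]
  rw [twoPt_cdf p t hp0 hp1]
  rcases lt_or_ge a 0 with h0 | h0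
  · -- F = 0, |F - q| = q
    rw [if_neg (not_le.mpr h0), if_neg (by intro h; linarith : ¬ t ≤ a)]
    have habs : |(0:ℝ) + 0 - q| = q := by rw [abs_of_nonpos (by linarith)]; ring
    rw [habs]
    exact rpow_chain β γ q (min q (1-q)) _ hβ hγ (abs_nonneg _) hmin0 hminq
      (le_trans (by nlinarith [abs_nonneg (a-c)]) hζγ)
  · rcases lt_or_ge a t with h1 | h1
    · -- middle region : F = p, |F - q| = δ
      rw [if_pos h0, if_neg (not_le.mpr h1)]
      have habs : |p + 0 - q| = δ := by
        rcases hp with h | h <;> rw [h] <;> [skip; rw [abs_of_nonpos (by linarith)]] <;>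
          [rw [abs_of_nonneg (by linarith)]; skip] <;> ring
      rw [habs]
      have hdt : |a - c| ≤ t := by
        rcases hcmem with h | h <;> rw [h, abs_le] <;> constructor <;> linarith
      exact rpow_chain β γ δ δ _ hβ hγ (abs_nonneg _) hδ0.le le_rfl
        (le_trans (by nlinarith [abs_nonneg (a-c)]) htγ)
    · -- F = 1, |F - q| = 1 - q
      rw [if_pos h0, if_pos h1]
      have habs : |p + (1 - p) - q| = 1 - q := by
        rw [show p + (1 - p) - q = 1 - q by ring, abs_of_nonneg (by linarith)]
      rw [habs]
      exact rpow_chain β γ (1-q) (min q (1-q)) _ hβ hγ (abs_nonneg _) hmin0 hminq'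
        (le_trans (by nlinarith [abs_nonneg (a-c)]) hζγ)

def ptF (t : ℝ) (n : ℕ) (f : Fin n → Bool) : Fin n → ℝ := fun i => if f i then 0 else t

lemma iid_twoPt (p t : ℝ) (hp0 : 0 ≤ p) (hp1 : p ≤ 1) (n : ℕ) :
    iid (twoPt p t) n = ∑ f : Fin n → Bool,
      (∏ i, ENNReal.ofReal (if f i then p else 1 - p)) • Measure.dirac (ptF t n f) := by
  haveI := twoPt_prob p t hp0 hp1
  refine Measure.pi_eq fun s hs => ?_
  rw [Measure.finset_sum_apply]
  have hpi : MeasurableSet (Set.univ.pi s) := MeasurableSet.univ_pi hs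
  have hterm : ∀ f : Fin n → Bool,
      ((∏ i, ENNReal.ofReal (if f i then p else 1 - p)) • Measure.dirac (ptF t n f)) (Set.univ.pi s)
      = ∏ i, (ENNReal.ofReal (if f i then p else 1 - p)
          * (if (if f i then (0:ℝ) else t) ∈ s i then 1 else 0)) := by
    intro f
    rw [Measure.smul_apply, Measure.dirac_apply' _ hpi, smul_eq_mul,
      Finset.prod_mul_distrib, Finset.prod_boole]
    congr 1
    simp [Set.indicator_apply, ptF, Set.mem_univ_pi]
  rw [Finset.sum_congr rfl fun f _ => hterm f]
  have hfac : ∀ i : Fin n, twoPt p t (s i)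
      = ∑ b : Bool, (ENNReal.ofReal (if b then p else 1 - p)
          * (if (if b then (0:ℝ) else t) ∈ s i then 1 else 0)) := by
    intro i
    rw [twoPt_apply p t hp0 hp1 (hs i), Fintype.sum_bool]
    norm_num
  rw [Finset.prod_congr rfl fun i _ => hfac i,
    Finset.prod_univ_sum (fun _ : Fin n => (Finset.univ : Finset Bool)), Fintype.piFinset_univ]

lemma prob_formula (p t : ℝ) (hp0 : 0 ≤ p) (hp1 : p ≤ 1) (n : ℕ)
    {Ω : Type} [MeasurableSpace Ω] (ν : Measure Ω) [IsProbabilityMeasure ν]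
    {A : Set ((Fin n → ℝ) × Ω)} (hA : MeasurableSet A) :
    ((iid (twoPt p t) n).prod ν) A
      = ∑ f : Fin n → Bool, (∏ i, ENNReal.ofReal (if f i then p else 1 - p))
          * ν (Prod.mk (ptF t n f) ⁻¹' A) := by
  haveI := twoPt_prob p t hp0 hp1
  rw [Measure.prod_apply hA, iid_twoPt p t hp0 hp1 n, lintegral_finset_sum_measure]
  refine Finset.sum_congr rfl fun f _ => ?_
  rw [lintegral_smul_measure, lintegral_dirac' _ (measurable_measure_prodMk_left hA), smul_eq_mul]

lemma ofReal_min' (x y : ℝ) :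
    ENNReal.ofReal (min x y) = min (ENNReal.ofReal x) (ENNReal.ofReal y) := by
  rcases le_total x y with h | h
  · rw [min_eq_left h, min_eq_left (ENNReal.ofReal_le_ofReal h)]
  · rw [min_eq_right h, min_eq_right (ENNReal.ofReal_le_ofReal h)]

lemma two_measure_bound (n : ℕ) (q δ t : ℝ)
    (hq0 : 0 < q) (hq1 : q < 1) (hδ0 : 0 < δ) (hδq : δ ≤ q) (hδq' : δ ≤ 1 - q)
    {Ω : Type} [MeasurableSpace Ω] (ν : Measure Ω) [IsProbabilityMeasure ν]
    {E : Set ((Fin n → ℝ) × Ω)} (hE : MeasurableSet E)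
    (hmin : (2:ℝ)/3 ≤ ∑ f : Fin n → Bool,
      min (∏ i, (if f i then q + δ else 1 - q - δ)) (∏ i, (if f i then q - δ else 1 - q + δ))) :
    ENNReal.ofReal ((2:ℝ)/3) ≤
      ((iid (twoPt (q + δ) t) n).prod ν) E + ((iid (twoPt (q - δ) t) n).prod ν) Eᶜ := by
  have hp0 : (0:ℝ) ≤ q + δ := by linarith
  have hp1 : q + δ ≤ 1 := by linarith
  have hm0 : (0:ℝ) ≤ q - δ := by linarith
  have hm1 : q - δ ≤ 1 := by linarith
  rw [prob_formula (q + δ) t hp0 hp1 n ν hE, prob_formula (q - δ) t hm0 hm1 n ν hE.compl]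
  have hflip : ∀ f : Fin n → Bool,
      ν (Prod.mk (ptF t n f) ⁻¹' Eᶜ) = 1 - ν (Prod.mk (ptF t n f) ⁻¹' E) := by
    intro f
    rw [Set.preimage_compl, measure_compl (measurable_prodMk_left hE) (measure_ne_top _ _),
      measure_univ]
  simp only [hflip]
  rw [← Finset.sum_add_distrib]
  set g : (Fin n → Bool) → ENNReal := fun f => ν (Prod.mk (ptF t n f) ⁻¹' E) with hg
  set Wp : (Fin n → Bool) → ENNReal :=
    fun f => ∏ i, ENNReal.ofReal (if f i then q + δ else 1 - (q + δ)) with hWp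
  set Wm : (Fin n → Bool) → ENNReal :=
    fun f => ∏ i, ENNReal.ofReal (if f i then q - δ else 1 - (q - δ)) with hWm
  have key : ∀ f : Fin n → Bool,
      min (Wp f) (Wm f) ≤ Wp f * g f + Wm f * (1 - g f) := by
    intro f
    have hg1 : g f ≤ 1 := prob_le_one
    calc min (Wp f) (Wm f) = min (Wp f) (Wm f) * (g f + (1 - g f)) := by
          rw [add_comm, tsub_add_cancel_of_le hg1, mul_one]
      _ = min (Wp f) (Wm f) * g f + min (Wp f) (Wm f) * (1 - g f) := mul_add _ _ _
      _ ≤ Wp f * g f + Wm f * (1 - g f) :=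
          add_le_add (mul_le_mul_left (min_le_left _ _) _)
            (mul_le_mul_left (min_le_right _ _) _)
  have hsum : ∑ f : Fin n → Bool, min (Wp f) (Wm f)
      ≤ ∑ f : Fin n → Bool, (Wp f * g f + Wm f * (1 - g f)) := Finset.sum_le_sum fun f _ => key f
  refine le_trans ?_ hsum
  -- convert real inequality to ENNReal
  have hWpr : ∀ f : Fin n → Bool,
      Wp f = ENNReal.ofReal (∏ i, (if f i then q + δ else 1 - q - δ)) := by
    intro f
    rw [ENNReal.ofReal_prod_of_nonneg (fun i _ => by split <;> linarith), hWp]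
    refine Finset.prod_congr rfl fun i _ => ?_
    congr 1
    split <;> ring
  have hWmr : ∀ f : Fin n → Bool,
      Wm f = ENNReal.ofReal (∏ i, (if f i then q - δ else 1 - q + δ)) := by
    intro f
    rw [ENNReal.ofReal_prod_of_nonneg (fun i _ => by split <;> linarith), hWm]
    refine Finset.prod_congr rfl fun i _ => ?_
    congr 1
    split <;> ring
  calc ENNReal.ofReal ((2:ℝ)/3)
      ≤ ENNReal.ofReal (∑ f : Fin n → Bool,
          min (∏ i, (if f i then q + δ else 1 - q - δ))
            (∏ i, (if f i then q - δ else 1 - q + δ))) := ENNReal.ofReal_le_ofReal hmin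
    _ = ∑ f : Fin n → Bool, ENNReal.ofReal
          (min (∏ i, (if f i then q + δ else 1 - q - δ))
            (∏ i, (if f i then q - δ else 1 - q + δ))) :=
        ENNReal.ofReal_sum_of_nonneg fun f _ => le_min
          (Finset.prod_nonneg fun i _ => by split <;> linarith)
          (Finset.prod_nonneg fun i _ => by split <;> linarith)
    _ = ∑ f : Fin n → Bool, min (Wp f) (Wm f) := by
        refine Finset.sum_congr rfl fun f _ => ?_
        rw [ofReal_min', hWpr f, hWmr f]


set_option maxHeartbeats 2000000 in
/-- Additive-regret lower bound, high-probability version. For every (possibly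
randomized) data-driven algorithm mapping `n` iid samples (and internal randomness) to a
nonnegative decision, there is a `(β,γ,ζ)`-clustered distribution on `[0,1]` on which, with
probability at least `1/3`,
`L(A) − L(a*) ≥ (1/(8·max{γ,1}))·(q(1−q)/(3√n))^{(β+2)/(β+1)}`. -/
theorem newsvendor_additive_regret_lower_bound
    (q β γ ζ : ℝ) (hq : q ∈ Ioo (0:ℝ) 1) (hβ : 0 ≤ β) (hγ : 0 < γ)
    (hζ : ζ ∈ Ioc 0 ((min q (1 - q)) ^ ((1:ℝ)/(β+1)) / γ))
    (n : ℕ) (hn : 1 ≤ n)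
    (Ω : Type) [MeasurableSpace Ω] (ν : Measure Ω) [IsProbabilityMeasure ν]
    (alg : (Fin n → ℝ) × Ω → ℝ) (halg : Measurable alg) (halg0 : ∀ p, 0 ≤ alg p) :
    ∃ μ : Measure ℝ, IsProbabilityMeasure μ ∧ μ (Icc (0:ℝ) 1)ᶜ = 0 ∧
      Clustered q β γ ζ μ ∧
      (1 : ENNReal)/3 ≤ ((iid μ n).prod ν)
        {p | (1/(8 * max γ 1)) * (q*(1-q)/(3*Real.sqrt n)) ^ ((β+2)/(β+1))
              ≤ expLoss q μ (alg p) - expLoss q μ (optDec q μ)} := by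
  obtain ⟨hq0, hq1⟩ := hq
  obtain ⟨hζ0, hζle⟩ := hζ
  have hq1' : (0:ℝ) < 1 - q := by linarith
  have hβ1 : (0:ℝ) < β + 1 := by linarith
  have he0 : (0:ℝ) < 1/(β+1) := by positivity
  have hsn : (1:ℝ) ≤ Real.sqrt n := by
    rw [show (1:ℝ) = Real.sqrt 1 by simp]
    exact Real.sqrt_le_sqrt (by exact_mod_cast hn)
  have hsn0 : (0:ℝ) < Real.sqrt n := by linarith
  set δ : ℝ := q*(1-q)/(3*Real.sqrt n) with hδdef
  have hδ0 : 0 < δ := by positivity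
  have hδle : δ ≤ q*(1-q)/3 := by
    rw [hδdef]
    apply div_le_div_of_nonneg_left (by nlinarith) (by norm_num) (by linarith)
  have hqq : q * (1-q) ≤ 1/4 := by nlinarith [sq_nonneg (q - 1/2)]
  have hδq : δ < q := by nlinarith
  have hδq' : δ < 1 - q := by nlinarith
  have hδ1 : δ ≤ 1 := by nlinarith
  have hn0 : (0:ℝ) < n := by exact_mod_cast Nat.pos_of_ne_zero (by omega)
  have hδn : δ^2 * (36*n) ≤ q*(1-q) := by
    have hsq : Real.sqrt n ^ 2 = (n:ℝ) := Real.sq_sqrt hn0.le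
    have hδs : δ * (3*Real.sqrt n) = q*(1-q) := by
      rw [hδdef]; field_simp
    have hδ2 : δ^2 * (9 * (n:ℝ)) = (q*(1-q))^2 := by
      rw [← hδs, mul_pow, mul_pow, hsq]; ring
    nlinarith
  -- the core min-sum bound
  have hmin := core_min_sum n hn q δ hq0 hq1 hδ0 hδq.le hδq'.le hδn
  -- geometry
  have hM1 : (1:ℝ) ≤ max γ 1 := le_max_right _ _
  have hMγ : γ ≤ max γ 1 := le_max_left _ _
  have hM0 : (0:ℝ) < max γ 1 := by linarith
  have hδe1 : δ ^ ((1:ℝ)/(β+1)) ≤ 1 := Real.rpow_le_one hδ0.le hδ1 he0.le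
  have hδe0 : (0:ℝ) < δ ^ ((1:ℝ)/(β+1)) := Real.rpow_pos_of_pos hδ0 _
  set t : ℝ := min (δ ^ ((1:ℝ)/(β+1)) / γ) 1 with htdef
  have ht0 : 0 < t := lt_min (by positivity) one_pos
  have ht1 : t ≤ 1 := min_le_right _ _
  have htγ : γ * t ≤ δ ^ ((1:ℝ)/(β+1)) := by
    have h := min_le_left (δ ^ ((1:ℝ)/(β+1)) / γ) 1
    rw [← htdef] at h
    rw [mul_comm]
    exact (le_div_iff₀ hγ).mp h
  have hζγ : γ * ζ ≤ (min q (1 - q)) ^ ((1:ℝ)/(β+1)) := by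
    rw [mul_comm]
    exact (le_div_iff₀ hγ).mp hζle
  have htlow : δ ^ ((1:ℝ)/(β+1)) / max γ 1 ≤ t := by
    refine le_min ?_ ?_
    · exact div_le_div_of_nonneg_left hδe0.le hγ hMγ
    · rw [div_le_one hM0]; linarith
  have hε : (1/(8 * max γ 1)) * δ ^ ((β+2)/(β+1)) ≤ δ * (t/2) := by
    have hsplit : ((β+2)/(β+1)) = 1 + 1/(β+1) := by field_simp; ring
    rw [hsplit, Real.rpow_add hδ0, Real.rpow_one]
    have h1 : δ ^ ((1:ℝ)/(β+1)) ≤ max γ 1 * t := by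
      rw [div_le_iff₀ hM0] at htlow
      linarith [htlow]
    have h2 : δ * δ ^ ((1:ℝ)/(β+1)) ≤ δ * (max γ 1 * t) :=
      mul_le_mul_of_nonneg_left h1 hδ0.le
    calc (1/(8 * max γ 1)) * (δ * δ ^ ((1:ℝ)/(β+1)))
        ≤ (1/(8 * max γ 1)) * (δ * (max γ 1 * t)) :=
          mul_le_mul_of_nonneg_left h2 (by positivity)
      _ = δ * t / 8 := by field_simp
      _ ≤ δ * (t/2) := by linarith [mul_pos hδ0 ht0]
  -- the event
  set E : Set ((Fin n → ℝ) × Ω) := {p | t/2 ≤ alg p} with hEdef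
  have hE : MeasurableSet E := measurableSet_le measurable_const halg
  have hbound := two_measure_bound n q δ t hq0 hq1 hδ0 hδq.le hδq'.le ν hE hmin
  have h23 : ENNReal.ofReal ((2:ℝ)/3) = (2:ENNReal)/3 := by
    rw [ENNReal.ofReal_div_of_pos (by norm_num), ENNReal.ofReal_ofNat, ENNReal.ofReal_ofNat]
  rw [h23] at hbound
  -- inclusions
  have hsub_hi : E ⊆ {p | (1/(8 * max γ 1)) * δ ^ ((β+2)/(β+1))
      ≤ expLoss q (twoPt (q+δ) t) (alg p) - expLoss q (twoPt (q+δ) t) (optDec q (twoPt (q+δ) t))} := by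
    intro p hp
    have hpE : t/2 ≤ alg p := hp
    rw [mem_setOf_eq, optDec_hi q (q+δ) t (by linarith) (by linarith) (by linarith)]
    have hreg := regret_hi q δ t (alg p) hq0 hq1 hδ0 (by linarith) ht0 (halg0 p)
    have hmm : t/2 ≤ min (alg p) t := le_min hpE (by linarith)
    calc (1/(8 * max γ 1)) * δ ^ ((β+2)/(β+1)) ≤ δ * (t/2) := hε
      _ ≤ δ * min (alg p) t := mul_le_mul_of_nonneg_left hmm hδ0.le
      _ ≤ _ := hreg
  have hsub_lo : Eᶜ ⊆ {p | (1/(8 * max γ 1)) * δ ^ ((β+2)/(β+1))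
      ≤ expLoss q (twoPt (q-δ) t) (alg p) - expLoss q (twoPt (q-δ) t) (optDec q (twoPt (q-δ) t))} := by
    intro p hp
    have hpE : alg p < t/2 := not_le.mp hp
    rw [mem_setOf_eq, optDec_lo q (q-δ) t (by linarith) (by linarith) (by linarith) hq1.le ht0.le]
    have hreg := regret_lo q δ t (alg p) hq0 hq1 hδ0 hδq.le ht0 (halg0 p) (by linarith)
    have hmm : t/2 ≤ t - alg p := by linarith
    calc (1/(8 * max γ 1)) * δ ^ ((β+2)/(β+1)) ≤ δ * (t/2) := hε
      _ ≤ δ * (t - alg p) := mul_le_mul_of_nonneg_left hmm hδ0.le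
      _ ≤ _ := hreg
  by_cases hc : (1:ENNReal)/3 ≤ ((iid (twoPt (q+δ) t) n).prod ν) E
  · refine ⟨twoPt (q+δ) t, twoPt_prob _ _ (by linarith) (by linarith), ?_, ?_, ?_⟩
    · exact twoPt_support _ _ (by linarith) (by linarith) ht0.le ht1
    · exact twoPt_clustered q β γ ζ δ t hq0 hq1 hβ hγ hζ0 hζγ hδ0 hδq.le hδq'.le ht0 htγ
        (q+δ) (Or.inl rfl)
    · exact le_trans hc (measure_mono hsub_hi)
  · have hc' : ((iid (twoPt (q+δ) t) n).prod ν) E < 1/3 := not_le.mp hc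
    have hlo : (1:ENNReal)/3 ≤ ((iid (twoPt (q-δ) t) n).prod ν) Eᶜ := by
      by_contra h
      have h' := not_le.mp h
      have := ENNReal.add_lt_add hc' h'
      rw [ENNReal.div_add_div_same] at this
      norm_num at this
      exact absurd hbound (not_le.mpr this)
    refine ⟨twoPt (q-δ) t, twoPt_prob _ _ (by linarith) (by linarith), ?_, ?_, ?_⟩
    · exact twoPt_support _ _ (by linarith) (by linarith) ht0.le ht1
    · exact twoPt_clustered q β γ ζ δ t hq0 hq1 hβ hγ hζ0 hζγ hδ0 hδq.le hδq'.le ht0 htγ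
        (q-δ) (Or.inr rfl)
    · exact le_trans hlo (measure_mono hsub_lo)
end
end

section
/- Fix q ∈ (0,1), ζ > 0, and τ > 0. Let F be the CDF of a probability distribution on [0,∞) with finite mean, with optimal decision a* = inf{a ≥ 0 : F(a) ≥ q} satisfying a* ≥ ζ, and suppose F(a*−ζ) ≥ τ and F(a*+ζ) ≤ 1−τ. Then the optimal expected loss satisfies L(a*) ≥ ζτ. -/
open MeasureTheory Set

noncomputable section

/-- If `a* ≥ ζ`, `F(a*−ζ) ≥ τ` and `F(a*+ζ) ≤ 1−τ`, then the optimal expected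
loss satisfies `L(a*) ≥ ζτ`. -/
theorem optimal_loss_lower_bound
    (q ζ τ : ℝ) (hq : q ∈ Ioo (0:ℝ) 1) (hζ : 0 < ζ) (hτ : 0 < τ)
    (μ : Measure ℝ) [IsProbabilityMeasure μ] (hsupp : μ (Iio 0) = 0)
    (hmean : Integrable (fun z => z) μ)
    (ha : ζ ≤ optDec q μ)
    (hlo : τ ≤ cdf' μ (optDec q μ - ζ)) (hhi : cdf' μ (optDec q μ + ζ) ≤ 1 - τ) :
    ζ * τ ≤ expLoss q μ (optDec q μ) := by
  obtain ⟨hq0, hq1⟩ := hq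
  set a := optDec q μ with ha_def
  set s : Set ℝ := Iic (a - ζ) with hs_def
  set t : Set ℝ := Ici (a + ζ) with ht_def
  have hms : MeasurableSet s := measurableSet_Iic
  have hmt : MeasurableSet t := measurableSet_Ici
  -- integrability of nvLoss
  have h1 : Integrable (fun z => max (z - a) 0) μ :=
    (hmean.sub (integrable_const a)).pos_part
  have h2 : Integrable (fun z => max (a - z) 0) μ :=
    ((integrable_const a).sub hmean).pos_part
  have hint : Integrable (fun z => nvLoss q a z) μ := by
    exact (h1.const_mul q).add (h2.const_mul (1 - q))
  -- the lower bound function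
  set g : ℝ → ℝ := fun z => s.indicator (fun _ => (1 - q) * ζ) z
      + t.indicator (fun _ => q * ζ) z with hg_def
  have hgint : Integrable g μ :=
    ((integrable_const ((1 - q) * ζ)).indicator hms).add
      ((integrable_const (q * ζ)).indicator hmt)
  have hle : ∀ z, g z ≤ nvLoss q a z := by
    intro z
    have hmax1 : z - a ≤ max (z - a) 0 := le_max_left _ _
    have hmax2 : a - z ≤ max (a - z) 0 := le_max_left _ _
    have hmax1' : (0:ℝ) ≤ max (z - a) 0 := le_max_right _ _
    have hmax2' : (0:ℝ) ≤ max (a - z) 0 := le_max_right _ _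
    by_cases hz1 : z ≤ a - ζ
    · have hz2 : ¬ (a + ζ ≤ z) := by intro h; linarith
      simp only [hg_def, hs_def, ht_def, indicator_of_mem (mem_Iic.mpr hz1),
        indicator_of_notMem (fun h => hz2 (mem_Ici.mp h))]
      unfold nvLoss
      nlinarith [mul_nonneg hq0.le hmax1', mul_le_mul_of_nonneg_left hmax2 (by linarith : (0:ℝ) ≤ 1 - q)]
    · by_cases hz2 : a + ζ ≤ z
      · simp only [hg_def, hs_def, ht_def, indicator_of_notMem (fun h => hz1 (mem_Iic.mp h)),
          indicator_of_mem (mem_Ici.mpr hz2)]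
        unfold nvLoss
        nlinarith [mul_nonneg (by linarith : (0:ℝ) ≤ 1 - q) hmax2', mul_le_mul_of_nonneg_left hmax1 hq0.le]
      · simp only [hg_def, hs_def, ht_def, indicator_of_notMem (fun h => hz1 (mem_Iic.mp h)),
          indicator_of_notMem (fun h => hz2 (mem_Ici.mp h))]
        unfold nvLoss
        nlinarith [mul_nonneg hq0.le hmax1', mul_nonneg (by linarith : (0:ℝ) ≤ 1 - q) hmax2']
  have hmono : ∫ z, g z ∂μ ≤ expLoss q μ a := integral_mono hgint hint hle
  -- compute ∫ g
  have hgval : ∫ z, g z ∂μ = (μ s).toReal * ((1 - q) * ζ) + (μ t).toReal * (q * ζ) := by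
    rw [hg_def]
    rw [integral_add ((integrable_const ((1 - q) * ζ)).indicator hms)
      ((integrable_const (q * ζ)).indicator hmt),
      integral_indicator_const _ hms, integral_indicator_const _ hmt]
    simp [smul_eq_mul]
    rfl
  -- mass bounds
  have hsval : τ ≤ (μ s).toReal := hlo
  have htval : τ ≤ (μ t).toReal := by
    have hcompl : μ t = 1 - μ (Iio (a + ζ)) := by
      have := measure_compl (measurableSet_Iio (a := a + ζ)) (measure_ne_top μ _)
      simpa [ht_def, compl_Iio, measure_univ] using this
    have hle1 : μ (Iio (a + ζ)) ≤ μ (Iic (a + ζ)) := measure_mono Iio_subset_Iic_self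
    have h1τ : (μ (Iio (a + ζ))).toReal ≤ 1 - τ :=
      le_trans (ENNReal.toReal_mono (measure_ne_top μ _) hle1) hhi
    have hfin : μ (Iio (a + ζ)) ≠ ⊤ := measure_ne_top μ _
    have hle1' : μ (Iio (a + ζ)) ≤ 1 := prob_le_one
    rw [hcompl, ENNReal.toReal_sub_of_le hle1' (by simp)]
    simp only [ENNReal.toReal_one]
    linarith
  have hq1' : (0:ℝ) < 1 - q := by linarith
  calc ζ * τ = (1 - q) * ζ * τ + q * ζ * τ := by ring
    _ ≤ (μ s).toReal * ((1 - q) * ζ) + (μ t).toReal * (q * ζ) := by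
        nlinarith [mul_pos hq1' hζ, mul_pos hq0 hζ]
    _ = ∫ z, g z ∂μ := hgval.symm
    _ ≤ expLoss q μ a := hmono
end
end

section
/- Fix q ∈ (0,1), β ∈ [0,∞), γ > 0, and ζ ∈ (0, (min{q,1−q})^{1/(β+1)}/γ]. Let F be the CDF of a probability distribution with optimal decision a* = inf{a : F(a) ≥ q} such that equality holds in the clustering condition, i.e., |a − a*| = (1/γ)·|F(a) − q|^{1/(β+1)} for all a ∈ [a*−ζ, a*+ζ]. Then for every β' ∈ [0, β), every γ' > 0, and every ζ' > 0, the distribution F is NOT (β',γ',ζ')-clustered; that is, β is the minimum possible clustering exponent for F. -/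
open MeasureTheory Set

noncomputable section

/-- If the clustering condition holds with equality:
`|a − a*| = (1/γ)·|F(a) − q|^{1/(β+1)}` for all `a ∈ [a*−ζ, a*+ζ]`, then for every
`β' ∈ [0,β)` and all `γ' > 0`, `ζ' > 0`, the distribution is not `(β',γ',ζ')`-clustered;
i.e. `β` is the minimum possible clustering exponent. -/
theorem minimal_clustering_exponent
    (q β γ ζ : ℝ) (hq : q ∈ Ioo (0:ℝ) 1) (hβ : 0 ≤ β) (hγ : 0 < γ)
    (hζ : ζ ∈ Ioc 0 ((min q (1 - q)) ^ ((1:ℝ)/(β+1)) / γ))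
    (μ : Measure ℝ) [IsProbabilityMeasure μ]
    (heq : ∀ a ∈ Icc (optDec q μ - ζ) (optDec q μ + ζ),
      |a - optDec q μ| = (1/γ) * |cdf' μ a - q| ^ ((1:ℝ)/(β+1))) :
    ∀ β' γ' ζ' : ℝ, 0 ≤ β' → β' < β → 0 < γ' → 0 < ζ' →
      ¬ Clustered q β' γ' ζ' μ := by
  intro β' γ' ζ' hβ'0 hβ'β hγ' hζ' hcl
  set a0 := optDec q μ with ha0
  have hβ1 : (0:ℝ) < β + 1 := by linarith
  have hβ'1 : (0:ℝ) < β' + 1 := by linarith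
  set r : ℝ := (β + 1) / (β' + 1) with hr
  have hr1 : 1 < r := (one_lt_div hβ'1).2 (by linarith)
  have hr0 : 0 < r - 1 := by linarith
  have hγr : 0 < γ ^ r := Real.rpow_pos_of_pos hγ r
  set δ : ℝ := (γ' / γ ^ r) ^ ((1:ℝ) / (r - 1)) with hδ
  have hδpos : 0 < δ := Real.rpow_pos_of_pos (div_pos hγ' hγr) _
  set ε : ℝ := min (min ζ ζ') (δ / 2) with hε
  have hεpos : 0 < ε := lt_min (lt_min hζ.1 hζ') (by linarith)
  have hεζ : ε ≤ ζ := le_trans (min_le_left _ _) (min_le_left _ _)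
  have hεζ' : ε ≤ ζ' := le_trans (min_le_left _ _) (min_le_right _ _)
  have hεδ : ε < δ := lt_of_le_of_lt (min_le_right _ _) (by linarith)
  set a : ℝ := a0 + ε with ha
  have hmem : a ∈ Icc (a0 - ζ) (a0 + ζ) := ⟨by simp [ha]; linarith, by simp [ha]; linarith⟩
  have hmem' : a ∈ Icc (a0 - ζ') (a0 + ζ') := ⟨by simp [ha]; linarith, by simp [ha]; linarith⟩
  have habs : |a - a0| = ε := by rw [ha]; simp [abs_of_pos hεpos]
  have h1 : ε = (1/γ) * |cdf' μ a - q| ^ ((1:ℝ)/(β+1)) := by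
    rw [← habs]; exact heq a hmem
  have hX : |cdf' μ a - q| ^ ((1:ℝ)/(β+1)) = γ * ε := by
    field_simp at h1; linarith
  have hXval : |cdf' μ a - q| = (γ * ε) ^ (β + 1) := by
    have := congrArg (fun x => x ^ (β + 1)) hX
    rw [← this, ← Real.rpow_mul (abs_nonneg _), one_div_mul_cancel (ne_of_gt hβ1),
      Real.rpow_one]
  have h2 : ε ≤ (1/γ') * (γ * ε) ^ r := by
    have := hcl a hmem'
    rw [habs, hXval, ← Real.rpow_mul (by positivity), mul_one_div] at this
    exact this
  -- show (γ*ε)^r < γ' * ε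
  have hδpow : δ ^ (r - 1) = γ' / γ ^ r := by
    rw [hδ, ← Real.rpow_mul (le_of_lt (div_pos hγ' hγr)),
      one_div_mul_cancel (ne_of_gt hr0), Real.rpow_one]
  have hεpow : ε ^ (r - 1) < γ' / γ ^ r := by
    rw [← hδpow]; exact Real.rpow_lt_rpow hεpos.le hεδ hr0
  have hkey : (γ * ε) ^ r < γ' * ε := by
    rw [Real.mul_rpow hγ.le hεpos.le]
    have hεr : ε ^ r = ε ^ (r - 1) * ε := by
      rw [show r = (r-1)+1 by ring, Real.rpow_add hεpos, Real.rpow_one]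
      ring_nf
    rw [hεr]
    have : γ ^ r * ε ^ (r - 1) < γ' := by
      have := (mul_lt_mul_iff_right₀ hγr).2 hεpow
      rwa [mul_div_cancel₀ _ (ne_of_gt hγr)] at this
    calc γ ^ r * (ε ^ (r - 1) * ε) = (γ ^ r * ε ^ (r - 1)) * ε := by ring
    _ < γ' * ε := by exact (mul_lt_mul_iff_left₀ hεpos).2 this
  have : ε < ε := by
    calc ε ≤ (1/γ') * (γ * ε) ^ r := h2
    _ < (1/γ') * (γ' * ε) := by
        exact (mul_lt_mul_iff_right₀ (by positivity)).2 hkey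
    _ = ε := by field_simp
  exact lt_irrefl _ this
end
end
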